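/- Let 0 ≤ r ≤ n. If the input sequence {u_k}_{k=0}^{N−r−1} is persistently exciting of order n+1−r, then for every output reachable system (A,B,C,D) (i.e., Γ has full row rank p) whose first r Markov parameters vanish (Γ_i = 0 for i = 0,…,r−1) and every initial state x_0 ∈ ℝ^n, the output sequence {y_k}_{k=0}^{N−1} generated from x_0 under {u_k}_{k=0}^{N−1} is persistently exciting of order 1. -/
import Mathlib


open Matrix Finset

noncomputable def stateSeq {n m : ℕ} (A : Matrix (Fin n) (Fin n) ℝ) (B : Matrix (Fin n) (Fin m) ℝ)
    (x0 : Fin n → ℝ) (u : ℕ → Fin m → ℝ) : ℕ → Fin n → ℝ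
  | 0 => x0
  | k + 1 => A.mulVec (stateSeq A B x0 u k) + B.mulVec (u k)

/-- Output sequence `y_k = C x_k + D u_k` of the LTI system started at `x0` with input `u`. -/
noncomputable def outputSeq {n m p : ℕ} (A : Matrix (Fin n) (Fin n) ℝ) (B : Matrix (Fin n) (Fin m) ℝ)
    (C : Matrix (Fin p) (Fin n) ℝ) (D : Matrix (Fin p) (Fin m) ℝ)
    (x0 : Fin n → ℝ) (u : ℕ → Fin m → ℝ) (k : ℕ) : Fin p → ℝ :=
  C.mulVec (stateSeq A B x0 u k) + D.mulVec (u k)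

/-- Markov parameters: `Γ_0 = D`, `Γ_j = C A^(j-1) B` for `j ≥ 1`. -/
noncomputable def Markov {n m p : ℕ} (A : Matrix (Fin n) (Fin n) ℝ) (B : Matrix (Fin n) (Fin m) ℝ)
    (C : Matrix (Fin p) (Fin n) ℝ) (D : Matrix (Fin p) (Fin m) ℝ) : ℕ → Matrix (Fin p) (Fin m) ℝ
  | 0 => D
  | j + 1 => C * A ^ j * B

/-- The matrix `M = [M_n ⋯ M_1 M_0]` with `M_j = ∑_{q=0}^j d_{j-q} Γ_q`; the block at
block-column `i` (from the left, `i = 0,…,n`) is `M_{n-i}`. -/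
noncomputable def Mmat {n m p : ℕ} (A : Matrix (Fin n) (Fin n) ℝ) (B : Matrix (Fin n) (Fin m) ℝ)
    (C : Matrix (Fin p) (Fin n) ℝ) (D : Matrix (Fin p) (Fin m) ℝ) (d : ℕ → ℝ) :
    Matrix (Fin p) (Fin (n + 1) × Fin m) ℝ :=
  Matrix.of fun i jl =>
    (∑ q ∈ Finset.range ((n - (jl.1 : ℕ)) + 1),
      d ((n - (jl.1 : ℕ)) - q) • Markov A B C D q) i jl.2

/-- The matrix `Γ = [Γ_0 Γ_1 ⋯ Γ_n]`. -/
noncomputable def Gammamat {n m p : ℕ} (A : Matrix (Fin n) (Fin n) ℝ) (B : Matrix (Fin n) (Fin m) ℝ)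
    (C : Matrix (Fin p) (Fin n) ℝ) (D : Matrix (Fin p) (Fin m) ℝ) :
    Matrix (Fin p) (Fin (n + 1) × Fin m) ℝ :=
  Matrix.of fun i jl => Markov A B C D (jl.1 : ℕ) i jl.2

lemma inj_of_rank_eq_card {ι κ : Type*} [Fintype ι] [Fintype κ] (M : Matrix ι κ ℝ)
    (h : M.rank = Fintype.card κ) : Function.Injective M.mulVecLin := by
  rw [← LinearMap.ker_eq_bot]
  have h1 := LinearMap.finrank_range_add_finrank_ker M.mulVecLin
  rw [Matrix.rank] at h
  rw [h] at h1
  simp [Module.finrank_pi] at h1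
  exact h1

lemma rank_eq_card_of_inj {a : ℕ} {κ : Type*} [Fintype κ] (M : Matrix (Fin a) κ ℝ)
    (h : Function.Injective Mᵀ.mulVecLin) : M.rank = a := by
  rw [← Matrix.rank_transpose, Matrix.rank, LinearMap.finrank_range_of_inj h]
  simp [Module.finrank_pi]

lemma state_shift {n m : ℕ} (A : Matrix (Fin n) (Fin n) ℝ) (B : Matrix (Fin n) (Fin m) ℝ)
    (x0 : Fin n → ℝ) (u : ℕ → Fin m → ℝ) (i k : ℕ) :
    stateSeq A B x0 u (k + i) = (A ^ i).mulVec (stateSeq A B x0 u k)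
      + ∑ j ∈ range i, (A ^ (i - 1 - j)).mulVec (B.mulVec (u (k + j))) := by
  induction i with
  | zero => simp [Matrix.one_mulVec]
  | succ i ih =>
    show stateSeq A B x0 u ((k + i) + 1) = _
    rw [stateSeq, ih, Matrix.mulVec_add]
    have h1 : A.mulVec ((A ^ i).mulVec (stateSeq A B x0 u k))
        = (A ^ (i + 1)).mulVec (stateSeq A B x0 u k) := by
      rw [Matrix.mulVec_mulVec, ← pow_succ']
    have h2 : A.mulVec (∑ j ∈ range i, (A ^ (i - 1 - j)).mulVec (B.mulVec (u (k + j))))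
        = ∑ j ∈ range i, (A ^ (i + 1 - 1 - j)).mulVec (B.mulVec (u (k + j))) := by
      rw [← Matrix.mulVecLin_apply, map_sum]
      refine Finset.sum_congr rfl fun j hj => ?_
      simp only [Finset.mem_range] at hj
      rw [Matrix.mulVecLin_apply, Matrix.mulVec_mulVec, ← pow_succ']
      have he : i - 1 - j + 1 = i + 1 - 1 - j := by omega
      rw [he]
    rw [h1, h2, Finset.sum_range_succ]
    have : (A ^ (i + 1 - 1 - i)).mulVec (B.mulVec (u (k + i))) = B.mulVec (u (k + i)) := by
      simp [Matrix.one_mulVec]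
    rw [this]
    abel

lemma sum_mulVec' {a b : ℕ} (s : Finset ℕ) (F : ℕ → Matrix (Fin a) (Fin b) ℝ) (v : Fin b → ℝ) :
    (∑ i ∈ s, F i).mulVec v = ∑ i ∈ s, (F i).mulVec v := by
  ext x
  simp [Matrix.mulVec, dotProduct, Finset.sum_apply, Matrix.sum_apply, Finset.sum_mul]
  rw [Finset.sum_comm]

lemma tri_sum {M : Type*} [AddCommMonoid M] (n : ℕ) (f : ℕ → ℕ → M) :
    ∑ i ∈ range (n+1), ∑ j ∈ range i, f i j
      = ∑ j ∈ range (n+1), ∑ q ∈ Ico 1 (n+1-j), f (j+q) j := by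
  rw [Finset.sum_sigma', Finset.sum_sigma']
  refine Finset.sum_nbij' (fun a => ⟨a.2, a.1 - a.2⟩) (fun a => ⟨a.1 + a.2, a.1⟩) ?_ ?_ ?_ ?_ ?_
  · rintro ⟨i, j⟩ h
    simp only [Finset.mem_sigma, Finset.mem_range, Finset.mem_Ico] at *
    omega
  · rintro ⟨j, q⟩ h
    simp only [Finset.mem_sigma, Finset.mem_range, Finset.mem_Ico] at *
    omega
  · rintro ⟨i, j⟩ h
    simp only [Finset.mem_sigma, Finset.mem_range, Finset.mem_Ico] at h
    have hji : j + (i - j) = i := by omega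
    simp [hji]
  · rintro ⟨j, q⟩ h
    simp only [Finset.mem_sigma, Finset.mem_range, Finset.mem_Ico] at h
    have hq : j + q - j = q := by omega
    simp [hq]
  · rintro ⟨i, j⟩ h
    simp only [Finset.mem_sigma, Finset.mem_range] at h
    simp only
    congr 1
    omega

lemma key_id {n m p : ℕ} (A : Matrix (Fin n) (Fin n) ℝ) (B : Matrix (Fin n) (Fin m) ℝ)
    (C : Matrix (Fin p) (Fin n) ℝ) (D : Matrix (Fin p) (Fin m) ℝ)
    (x0 : Fin n → ℝ) (u : ℕ → Fin m → ℝ) (c : ℕ → ℝ)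
    (hCH : ∑ i ∈ range (n+1), c i • A ^ i = 0) (k : ℕ) :
    ∑ i ∈ range (n+1), c i • outputSeq A B C D x0 u (k+i)
      = ∑ j ∈ range (n+1), ∑ q ∈ range (n+1-j),
          c (j+q) • (Markov A B C D q).mulVec (u (k+j)) := by
  have expand : ∀ i, outputSeq A B C D x0 u (k+i) =
      (C * A^i).mulVec (stateSeq A B x0 u k)
      + ∑ j ∈ range i, (Markov A B C D (i-j)).mulVec (u (k+j))
      + (Markov A B C D 0).mulVec (u (k+i)) := by
    intro i
    rw [outputSeq, state_shift, Matrix.mulVec_add]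
    congr 1
    congr 1
    · rw [Matrix.mulVec_mulVec]
    · rw [← Matrix.mulVecLin_apply, map_sum]
      refine Finset.sum_congr rfl fun j hj => ?_
      simp only [Finset.mem_range] at hj
      rw [Matrix.mulVecLin_apply, Matrix.mulVec_mulVec, Matrix.mulVec_mulVec]
      have hij : i - j = (i - 1 - j) + 1 := by omega
      rw [hij]
      rfl
  have step1 : ∑ i ∈ range (n+1), c i • outputSeq A B C D x0 u (k+i)
      = (∑ i ∈ range (n+1), c i • ((C * A^i).mulVec (stateSeq A B x0 u k)))
      + (∑ i ∈ range (n+1), ∑ j ∈ range i, c i • (Markov A B C D (i-j)).mulVec (u (k+j)))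
      + (∑ i ∈ range (n+1), c i • (Markov A B C D 0).mulVec (u (k+i))) := by
    rw [← Finset.sum_add_distrib, ← Finset.sum_add_distrib]
    refine Finset.sum_congr rfl fun i _ => ?_
    rw [expand i, smul_add, smul_add, Finset.smul_sum]
  have t1 : ∑ i ∈ range (n+1), c i • ((C * A^i).mulVec (stateSeq A B x0 u k)) = 0 := by
    have e1 : ∀ i ∈ range (n+1), c i • ((C * A^i).mulVec (stateSeq A B x0 u k))
        = (c i • (C * A^i)).mulVec (stateSeq A B x0 u k) := by
      intro i _
      rw [Matrix.smul_mulVec]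
    have e2 : ∑ i ∈ range (n+1), c i • (C * A^i) = C * ∑ i ∈ range (n+1), c i • A^i := by
      ext a b
      simp only [Matrix.sum_apply, Matrix.smul_apply, Matrix.mul_apply, smul_eq_mul,
        Finset.mul_sum, Finset.sum_mul]
      rw [Finset.sum_comm]
      exact Finset.sum_congr rfl fun x _ => Finset.sum_congr rfl fun i _ => by ring
    rw [Finset.sum_congr rfl e1, ← sum_mulVec', e2, hCH, Matrix.mul_zero, Matrix.zero_mulVec]
  have t2 : ∑ i ∈ range (n+1), ∑ j ∈ range i, c i • (Markov A B C D (i-j)).mulVec (u (k+j))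
      = ∑ j ∈ range (n+1), ∑ q ∈ Ico 1 (n+1-j), c (j+q) • (Markov A B C D q).mulVec (u (k+j)) := by
    rw [tri_sum]
    refine Finset.sum_congr rfl fun j _ => Finset.sum_congr rfl fun q hq => ?_
    have : j + q - j = q := by omega
    rw [this]
  rw [step1, t1, t2, zero_add]
  rw [← Finset.sum_add_distrib]
  refine Finset.sum_congr rfl fun j hj => ?_
  simp only [Finset.mem_range] at hj
  rw [Finset.sum_range_eq_add_Ico _ (by omega : 0 < n + 1 - j)]
  have : c (j + 0) • Markov A B C D 0 *ᵥ u (k + j) = c j • Markov A B C D 0 *ᵥ u (k + j) := by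
    rw [add_zero]
  rw [this, add_comm]

/-- if `{u_k}_{k=0}^{N-r-1}` is PE of order `n+1-r`, then for every output
reachable system whose first `r` Markov parameters vanish, and every initial state, the output
`{y_k}_{k=0}^{N-1}` is PE of order 1. -/
theorem stmt_12 {n m p : ℕ} (hn : 0 < n) (hm : 0 < m) (hp : 0 < p)
    (r : ℕ) (hr : r ≤ n) (N : ℕ) (hN : n < N) (u : ℕ → Fin m → ℝ)
    (hPE : (Matrix.of fun (il : Fin (n + 1 - r) × Fin m) (k : Fin ((N - r) - (n + 1 - r) + 1)) =>
        u ((k : ℕ) + (il.1 : ℕ)) il.2).rank = m * (n + 1 - r)) :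
    ∀ (A : Matrix (Fin n) (Fin n) ℝ) (B : Matrix (Fin n) (Fin m) ℝ)
      (C : Matrix (Fin p) (Fin n) ℝ) (D : Matrix (Fin p) (Fin m) ℝ),
      (Gammamat A B C D).rank = p →
      (∀ i < r, Markov A B C D i = 0) →
      ∀ x0 : Fin n → ℝ,
        (Matrix.of fun (i : Fin p) (k : Fin N) => outputSeq A B C D x0 u (k : ℕ) i).rank = p := by
  intro A B C D hΓ hvanish x0
  have hT : (N - r) - (n + 1 - r) + 1 = N - n := by omega
  set c : ℕ → ℝ := A.charpoly.coeff with hc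
  have hdeg : A.charpoly.natDegree = n := by
    simpa using A.charpoly_natDegree_eq_dim
  have hCH : ∑ i ∈ range (n+1), c i • A ^ i = 0 := by
    have h0 := A.aeval_self_charpoly
    rw [Polynomial.aeval_eq_sum_range, hdeg] at h0
    exact h0
  have hcn : c n = 1 := by
    have hmon := A.charpoly_monic
    rw [Polynomial.Monic, Polynomial.leadingCoeff, hdeg] at hmon
    exact hmon
  set Mp : ℕ → Matrix (Fin p) (Fin m) ℝ :=
    fun j => ∑ q ∈ range (n+1-j), c (j+q) • Markov A B C D q with hMp
  have hMp0 : ∀ j, n+1-r ≤ j → Mp j = 0 := by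
    intro j hj
    rw [hMp]
    apply Finset.sum_eq_zero
    intro q hq
    simp only [Finset.mem_range] at hq
    rw [hvanish q (by omega), smul_zero]
  have key2 : ∀ k, ∑ i ∈ range (n+1), c i • outputSeq A B C D x0 u (k+i)
      = ∑ j ∈ range (n+1), (Mp j).mulVec (u (k+j)) := by
    intro k
    rw [key_id A B C D x0 u c hCH k]
    refine Finset.sum_congr rfl fun j _ => ?_
    rw [hMp, sum_mulVec']
    exact Finset.sum_congr rfl fun q _ => (Matrix.smul_mulVec _ _ _).symm
  apply rank_eq_card_of_inj
  rw [← LinearMap.ker_eq_bot, Submodule.eq_bot_iff]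
  intro ξ hξ
  rw [LinearMap.mem_ker, Matrix.mulVecLin_apply] at hξ
  have hy : ∀ k, k < N → ∑ i, ξ i * outputSeq A B C D x0 u k i = 0 := by
    intro k hk
    have h0 := congrFun hξ ⟨k, hk⟩
    simpa [Matrix.mulVec, dotProduct, mul_comm] using h0
  have hkey : ∀ k, k + n < N →
      ∑ j ∈ range (n+1), (∑ i, ξ i * ((Mp j).mulVec (u (k+j))) i) = 0 := by
    intro k hk
    have h1 := key2 k
    calc ∑ j ∈ range (n+1), ∑ i, ξ i * ((Mp j).mulVec (u (k+j))) i
        = ∑ i, ξ i * (∑ j ∈ range (n+1), (Mp j).mulVec (u (k+j))) i := by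
          simp only [Finset.sum_apply, Finset.mul_sum]
          rw [Finset.sum_comm]
      _ = ∑ i, ξ i * (∑ j ∈ range (n+1), c j • outputSeq A B C D x0 u (k+j)) i := by
          rw [← h1]
      _ = ∑ j ∈ range (n+1), c j * ∑ i, ξ i * outputSeq A B C D x0 u (k+j) i := by
          simp only [Finset.sum_apply, Pi.smul_apply, smul_eq_mul, Finset.mul_sum]
          rw [Finset.sum_comm]
          refine Finset.sum_congr rfl fun j _ => ?_
          exact Finset.sum_congr rfl fun i _ => by ring
      _ = 0 := by
          apply Finset.sum_eq_zero
          intro j hj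
          simp only [Finset.mem_range] at hj
          rw [hy (k+j) (by omega), mul_zero]
  have hMall : ∀ j, ∀ l : Fin m, ∑ i, ξ i * Mp j i l = 0 := by
    have hHinj : Function.Injective
        ((Matrix.of fun (il : Fin (n + 1 - r) × Fin m) (k : Fin ((N - r) - (n + 1 - r) + 1)) =>
          u ((k : ℕ) + (il.1 : ℕ)) il.2)ᵀ).mulVecLin := by
      apply inj_of_rank_eq_card
      rw [Matrix.rank_transpose, hPE]
      simp [mul_comm]
    have hv0 : (fun (jl : Fin (n+1-r) × Fin m) => ∑ i, ξ i * Mp (jl.1 : ℕ) i jl.2) = 0 := by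
      apply hHinj
      rw [map_zero]
      ext k
      rw [Matrix.mulVecLin_apply]
      have e1 : ((Matrix.of fun (il : Fin (n + 1 - r) × Fin m)
            (k : Fin ((N - r) - (n + 1 - r) + 1)) => u ((k : ℕ) + (il.1 : ℕ)) il.2)ᵀ *ᵥ
            (fun (jl : Fin (n+1-r) × Fin m) => ∑ i, ξ i * Mp (jl.1 : ℕ) i jl.2)) k
          = ∑ jl : Fin (n+1-r) × Fin m,
              u ((k : ℕ) + (jl.1 : ℕ)) jl.2 * (∑ i, ξ i * Mp (jl.1 : ℕ) i jl.2) := by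
        simp [Matrix.mulVec, dotProduct]
      rw [e1, Fintype.sum_prod_type]
      have inner : ∀ (j : ℕ), ∑ l, u ((k : ℕ)+j) l * ∑ i, ξ i * Mp j i l
          = ∑ i, ξ i * ((Mp j).mulVec (u ((k : ℕ)+j))) i := by
        intro j
        simp only [Matrix.mulVec, dotProduct, Finset.mul_sum]
        rw [Finset.sum_comm]
        exact Finset.sum_congr rfl fun l _ => Finset.sum_congr rfl fun i _ => by ring
      have e3 : ∑ j' : Fin (n+1-r), (∑ l, u ((k : ℕ)+(j' : ℕ)) l * ∑ i, ξ i * Mp (j' : ℕ) i l)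
          = ∑ j ∈ range (n+1-r), ∑ i, ξ i * ((Mp j).mulVec (u ((k : ℕ)+j))) i := by
        rw [Fin.sum_univ_eq_sum_range
          (fun j => ∑ l, u ((k : ℕ)+j) l * ∑ i, ξ i * Mp j i l)]
        exact Finset.sum_congr rfl fun j _ => inner j
      have e4 : ∑ j ∈ range (n+1-r), ∑ i, ξ i * ((Mp j).mulVec (u ((k : ℕ)+j))) i
          = ∑ j ∈ range (n+1), ∑ i, ξ i * ((Mp j).mulVec (u ((k : ℕ)+j))) i := by
        apply Finset.sum_subset (Finset.range_subset_range.mpr (by omega))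
        intro j hj1 hj2
        simp only [Finset.mem_range] at hj1 hj2
        rw [hMp0 j (by omega)]
        simp
      rw [e3, e4]
      have hkN : (k : ℕ) + n < N := by
        have := k.isLt
        omega
      exact hkey (k : ℕ) hkN
    intro j l
    by_cases hj : j < n + 1 - r
    · have h0 := congrFun hv0 (⟨j, hj⟩, l)
      simpa using h0
    · rw [hMp0 j (by omega)]
      simp
  have hGam : ∀ q, q ≤ n → ∀ l : Fin m, ∑ i, ξ i * Markov A B C D q i l = 0 := by
    intro q
    induction q using Nat.strong_induction_on with
    | _ q ih =>
      intro hq l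
      have h1 := hMall (n - q) l
      have hrange : n + 1 - (n - q) = q + 1 := by omega
      rw [hMp] at h1
      simp only [hrange, Matrix.sum_apply, Matrix.smul_apply, smul_eq_mul, Finset.mul_sum] at h1
      rw [Finset.sum_comm, Finset.sum_range_succ] at h1
      have hz : ∑ q' ∈ range q, ∑ i, ξ i * (c ((n-q)+q') * Markov A B C D q' i l) = 0 := by
        apply Finset.sum_eq_zero
        intro q' hq'
        simp only [Finset.mem_range] at hq'
        have hih := ih q' hq' (by omega) l
        have : ∑ i, ξ i * (c ((n-q)+q') * Markov A B C D q' i l)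
            = c ((n-q)+q') * ∑ i, ξ i * Markov A B C D q' i l := by
          rw [Finset.mul_sum]
          exact Finset.sum_congr rfl fun i _ => by ring
        rw [this, hih, mul_zero]
      rw [hz, zero_add] at h1
      have hnn : (n - q) + q = n := by omega
      rw [hnn] at h1
      simpa [hcn] using h1
  have hGinj : Function.Injective ((Gammamat A B C D)ᵀ).mulVecLin := by
    apply inj_of_rank_eq_card
    rw [Matrix.rank_transpose, hΓ]
    simp
  apply hGinj
  rw [map_zero, Matrix.mulVecLin_apply]
  ext jl
  have e5 : ((Gammamat A B C D)ᵀ *ᵥ ξ) jl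
      = ∑ i, ξ i * Markov A B C D (jl.1 : ℕ) i jl.2 := by
    simp [Matrix.mulVec, dotProduct, Gammamat, mul_comm]
  rw [e5]
  have : (jl.1 : ℕ) ≤ n := by omega
  rw [hGam (jl.1 : ℕ) this jl.2]
  simp
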